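/- Fix a real z ∈ (0,1]. Define Γ : ℕ → ℝ and Υ : ℕ → ℝ (indexed by n ≥ 1) by Γ₁ = 1 + z³, Υ₁ = z² + z, and for n ≥ 1: Γ_{n+1} = Γ_n³ + Υ_n³ and Υ_{n+1} = Υ_n²·Γ_n + Υ_n³. Then the sequence (log Γ_n)/3^n converges as n → ∞. -/

import Mathlib

open Filter

theorem sierpinski_thermodynamic_limit (z : ℝ) (hz : z ∈ Set.Ioc (0 : ℝ) 1)
    (Γ Υ : ℕ → ℝ)
    (hΓ1 : Γ 1 = 1 + z ^ 3) (hΥ1 : Υ 1 = z ^ 2 + z)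
    (hΓ : ∀ n : ℕ, 1 ≤ n → Γ (n + 1) = Γ n ^ 3 + Υ n ^ 3)
    (hΥ : ∀ n : ℕ, 1 ≤ n → Υ (n + 1) = Υ n ^ 2 * Γ n + Υ n ^ 3) :
    ∃ L : ℝ, Tendsto (fun n : ℕ => Real.log (Γ n) / 3 ^ n) atTop (nhds L) := by
  obtain ⟨hz0, hz1⟩ := hz
  -- key positivity/comparison facts
  have key : ∀ n : ℕ, 1 ≤ n → 0 < Υ n ∧ Υ n ≤ Γ n := by
    intro n hn
    induction n with
    | zero => omega
    | succ m ih =>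
      rcases Nat.lt_or_ge m 1 with hm | hm
      · have hm0 : m = 0 := by omega
        subst hm0
        refine ⟨by rw [hΥ1]; positivity, ?_⟩
        rw [hΥ1, hΓ1]
        nlinarith [mul_nonneg (mul_self_nonneg (1 - z)) (by positivity : (0:ℝ) ≤ 1 + z)]
      · obtain ⟨h1, h2⟩ := ih hm
        have hΓm : 0 < Γ m := lt_of_lt_of_le h1 h2
        refine ⟨by rw [hΥ m hm]; positivity, ?_⟩
        rw [hΥ m hm, hΓ m hm]
        nlinarith [sq_nonneg (Υ m), sq_nonneg (Γ m - Υ m)]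
  have hΓpos : ∀ n : ℕ, 1 ≤ n → 0 < Γ n := fun n hn =>
    lt_of_lt_of_le (key n hn).1 (key n hn).2
  set a : ℕ → ℝ := fun n => Real.log (Γ n) / 3 ^ n with ha
  -- step inequalities
  have step : ∀ n : ℕ, 1 ≤ n →
      a n ≤ a (n + 1) ∧ a (n + 1) ≤ a n + Real.log 2 / 3 ^ (n + 1) := by
    intro n hn
    obtain ⟨hU, hUG⟩ := key n hn
    have hG : 0 < Γ n := lt_of_lt_of_le hU hUG
    have low : 3 * Real.log (Γ n) ≤ Real.log (Γ (n + 1)) := by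
      rw [hΓ n hn]
      calc 3 * Real.log (Γ n) = Real.log (Γ n ^ 3) := by
            rw [Real.log_pow]; norm_num
        _ ≤ Real.log (Γ n ^ 3 + Υ n ^ 3) := by
            apply Real.log_le_log (by positivity)
            nlinarith [pow_pos hU 3]
    have high : Real.log (Γ (n + 1)) ≤ Real.log 2 + 3 * Real.log (Γ n) := by
      rw [hΓ n hn]
      have h1 : Γ n ^ 3 + Υ n ^ 3 ≤ 2 * Γ n ^ 3 := by
        nlinarith [pow_le_pow_left₀ hU.le hUG 3]
      calc Real.log (Γ n ^ 3 + Υ n ^ 3) ≤ Real.log (2 * Γ n ^ 3) := by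
            apply Real.log_le_log (by positivity) h1
        _ = Real.log 2 + 3 * Real.log (Γ n) := by
            rw [Real.log_mul (by norm_num) (by positivity), Real.log_pow]; norm_num
    have e : a n = 3 * Real.log (Γ n) / 3 ^ (n + 1) := by
      simp only [ha, pow_succ]
      field_simp
    constructor
    · rw [e]
      simp only [ha]
      gcongr
    · rw [e, ← add_div]
      simp only [ha]
      gcongr <;> linarith [high]
  set b : ℕ → ℝ := fun n => a (n + 1) with hb
  have hmono : Monotone b := by
    apply monotone_nat_of_le_succ
    intro n
    exact (step (n + 1) (by omega)).1
  have hlog2 : (0:ℝ) ≤ Real.log 2 := Real.log_nonneg (by norm_num)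
  have hbound : ∀ n : ℕ, b n ≤ b 0 + Real.log 2 * (1 - (1/3 : ℝ) ^ n) / 6 := by
    intro n
    induction n with
    | zero => simp
    | succ m ih =>
      have hstep := (step (m + 1) (by omega)).2
      have hpow : Real.log 2 / 3 ^ (m + 1 + 1) = Real.log 2 * (1/3 : ℝ) ^ m / 9 := by
        rw [one_div_pow, mul_one_div, div_div]
        congr 1
        ring
      have hone : (1/3 : ℝ) ^ (m + 1) = (1/3 : ℝ) ^ m / 3 := by
        rw [pow_succ]; ring
      calc b (m + 1) ≤ b m + Real.log 2 / 3 ^ (m + 1 + 1) := hstep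
        _ ≤ b 0 + Real.log 2 * (1 - (1/3 : ℝ) ^ m) / 6 + Real.log 2 * (1/3 : ℝ) ^ m / 9 := by
            rw [hpow] at hstep ⊢; linarith
        _ = b 0 + Real.log 2 * (1 - (1/3 : ℝ) ^ (m + 1)) / 6 := by
            rw [hone]; ring
  have hbdd : BddAbove (Set.range b) := by
    refine ⟨b 0 + Real.log 2 / 6, ?_⟩
    rintro x ⟨n, rfl⟩
    have := hbound n
    have hp : (0:ℝ) ≤ (1/3 : ℝ) ^ n := by positivity
    nlinarith
  have hbtend : Tendsto b atTop (nhds (⨆ n, b n)) := tendsto_atTop_ciSup hmono hbdd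
  refine ⟨⨆ n, b n, ?_⟩
  have : Tendsto (fun n : ℕ => a (n + 1)) atTop (nhds (⨆ n, b n)) := hbtend
  exact (tendsto_add_atTop_iff_nat 1).1 this
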